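/- Let B be a nondegenerate symmetric bilinear form on ℝ³, let U ⊆ ℝ² be open, and let x : U → ℝ³ be twice continuously differentiable with B(x, x) = c constant on U, where c ≠ 0. Suppose at a point w₀ ∈ U the three vectors x(w₀), x_u(w₀), x_v(w₀) are linearly independent. Then x_{uv}(w₀) lies in the span of {x_u(w₀), x_v(w₀)} if and only if B(x_u(w₀), x_v(w₀)) = 0; that is, on a central quadric {B(x,x) = c}, parameters are conjugate exactly when they are orthogonal. (Paper: Section 2, key observation, using 0 = ∂_u B(x, x_v) = B(x_u, x_v) + B(x, x_{uv}).) -/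

import Mathlib

noncomputable def bC (B : LinearMap.BilinForm ℝ (ℝ × ℝ × ℝ)) :
    (ℝ × ℝ × ℝ) →L[ℝ] (ℝ × ℝ × ℝ) →L[ℝ] ℝ :=
  LinearMap.toContinuousLinearMap
    (((LinearMap.toContinuousLinearMap :
        ((ℝ × ℝ × ℝ) →ₗ[ℝ] ℝ) ≃ₗ[ℝ] ((ℝ × ℝ × ℝ) →L[ℝ] ℝ)).toLinearMap).comp B)

@[simp] lemma bC_apply (B : LinearMap.BilinForm ℝ (ℝ × ℝ × ℝ)) (ξ η : ℝ × ℝ × ℝ) :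
    bC B ξ η = B ξ η := rfl

/-- Partial derivative in the `u`-direction. -/
noncomputable def pdu (x : ℝ × ℝ → ℝ × ℝ × ℝ) (p : ℝ × ℝ) : ℝ × ℝ × ℝ :=
  fderiv ℝ x p (1, 0)

/-- Partial derivative in the `v`-direction. -/
noncomputable def pdv (x : ℝ × ℝ → ℝ × ℝ × ℝ) (p : ℝ × ℝ) : ℝ × ℝ × ℝ :=
  fderiv ℝ x p (0, 1)

/-- Mixed second partial derivative `x_{uv}`. -/
noncomputable def pduv (x : ℝ × ℝ → ℝ × ℝ × ℝ) (p : ℝ × ℝ) : ℝ × ℝ × ℝ :=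
  fderiv ℝ (fun q => fderiv ℝ x q (1, 0)) p (0, 1)

/-- **Section 2, key observation.** On a central quadric `{B(x,x) = c}` (with `c ≠ 0`),
parameters are conjugate exactly when they are orthogonal: at a point where
`x, x_u, x_v` are linearly independent, `x_{uv}` lies in the span of `x_u, x_v` if and
only if `B(x_u, x_v) = 0`. -/
theorem conjugate_iff_orthogonal_on_quadric
    (B : LinearMap.BilinForm ℝ (ℝ × ℝ × ℝ))
    (hBsymm : ∀ ξ η, B ξ η = B η ξ) (hBnd : B.Nondegenerate)
    (U : Set (ℝ × ℝ)) (hUopen : IsOpen U)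
    (x : ℝ × ℝ → ℝ × ℝ × ℝ) (hx : ContDiffOn ℝ 2 x U)
    (c : ℝ) (hc : c ≠ 0) (hquad : ∀ p ∈ U, B (x p) (x p) = c)
    (w₀ : ℝ × ℝ) (hw₀ : w₀ ∈ U)
    (hind : LinearIndependent ℝ ![x w₀, pdu x w₀, pdv x w₀]) :
    pduv x w₀ ∈ Submodule.span ℝ {pdu x w₀, pdv x w₀} ↔
      B (pdu x w₀) (pdv x w₀) = 0 := by
  have hxd : ∀ p ∈ U, DifferentiableAt ℝ x p := fun p hp =>
    (hx.differentiableOn (by norm_num)).differentiableAt (hUopen.mem_nhds hp)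
  -- Step B : tangency of the position vector
  have key1 : ∀ p ∈ U, ∀ h : ℝ × ℝ, B (x p) (fderiv ℝ x p h) = 0 := by
    intro p hp h
    have hx' := (hxd p hp).hasFDerivAt
    have hf : HasFDerivAt (fun q => bC B (x q) (x q))
        (((bC B (x p)).comp (fderiv ℝ x p)) + (((bC B).comp (fderiv ℝ x p)).flip (x p))) p :=
      HasFDerivAt.clm_apply (((bC B).hasFDerivAt).comp p hx') hx'
    have heq : (fun q => bC B (x q) (x q)) =ᶠ[nhds p] fun _ => c :=
      Filter.eventuallyEq_of_mem (hUopen.mem_nhds hp) (fun q hq => by simp [hquad q hq])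
    have hf0 : HasFDerivAt (fun q => bC B (x q) (x q)) 0 p :=
      (hasFDerivAt_const (𝕜 := ℝ) c p).congr_of_eventuallyEq heq
    have hD := hf.unique hf0
    have h2 := DFunLike.congr_fun hD h
    simp only [ContinuousLinearMap.add_apply, ContinuousLinearMap.comp_apply,
      ContinuousLinearMap.flip_apply, ContinuousLinearMap.zero_apply, bC_apply] at h2
    have hsym := hBsymm (x p) (fderiv ℝ x p h)
    linarith [h2]
  -- Step C : differentiate B (x p) (x_u p) = 0 in the v direction
  have hF : ContDiffOn ℝ 1 (fderiv ℝ x) U :=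
    hx.fderiv_of_isOpen hUopen (by norm_num)
  have hFd : DifferentiableAt ℝ (fderiv ℝ x) w₀ :=
    (hF.differentiableOn (by norm_num)).differentiableAt (hUopen.mem_nhds hw₀)
  have hFd' := hFd.hasFDerivAt
  set F' := fderiv ℝ (fderiv ℝ x) w₀ with hF'def
  have hyd : HasFDerivAt (fun q => fderiv ℝ x q (1, 0))
      ((fderiv ℝ x w₀).comp (0 : (ℝ × ℝ) →L[ℝ] ℝ × ℝ) + F'.flip ((1, 0) : ℝ × ℝ)) w₀ :=
    HasFDerivAt.clm_apply hFd' (hasFDerivAt_const _ w₀)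
  have hx₀' := (hxd w₀ hw₀).hasFDerivAt
  have hg : HasFDerivAt (fun q => bC B (x q) (fderiv ℝ x q (1, 0)))
      ((bC B (x w₀)).comp ((fderiv ℝ x w₀).comp (0 : (ℝ × ℝ) →L[ℝ] ℝ × ℝ) + F'.flip ((1, 0) : ℝ × ℝ)) +
        (((bC B).comp (fderiv ℝ x w₀)).flip (fderiv ℝ x w₀ (1, 0)))) w₀ :=
    HasFDerivAt.clm_apply (((bC B).hasFDerivAt).comp w₀ hx₀') hyd
  have hgeq : (fun q => bC B (x q) (fderiv ℝ x q (1, 0))) =ᶠ[nhds w₀] fun _ => (0 : ℝ) :=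
    Filter.eventuallyEq_of_mem (hUopen.mem_nhds hw₀) (fun q hq => by
      simp [key1 q hq (1, 0)])
  have hg0 : HasFDerivAt (fun q => bC B (x q) (fderiv ℝ x q (1, 0))) 0 w₀ :=
    (hasFDerivAt_const (𝕜 := ℝ) (0 : ℝ) w₀).congr_of_eventuallyEq hgeq
  have hG := hg.unique hg0
  have h3 := DFunLike.congr_fun hG ((0, 1) : ℝ × ℝ)
  have hpduv : pduv x w₀ = ((fderiv ℝ x w₀).comp (0 : (ℝ × ℝ) →L[ℝ] ℝ × ℝ) + F'.flip ((1, 0) : ℝ × ℝ)) (0, 1) := by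
    rw [pduv, hyd.fderiv]
  simp only [ContinuousLinearMap.add_apply, ContinuousLinearMap.comp_apply,
    ContinuousLinearMap.flip_apply, ContinuousLinearMap.zero_apply, bC_apply,
    map_add, map_zero, zero_add] at h3
  -- h3 : B (x w₀) (F' (0,1) (1,0)) + B (fderiv x w₀ (0,1)) (fderiv x w₀ (1,0)) = 0
  have key3 : B (x w₀) (pduv x w₀) + B (pdv x w₀) (pdu x w₀) = 0 := by
    rw [hpduv, pdu, pdv]
    simpa using h3
  have key1u : B (x w₀) (pdu x w₀) = 0 := key1 w₀ hw₀ (1, 0)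
  have key1v : B (x w₀) (pdv x w₀) = 0 := key1 w₀ hw₀ (0, 1)
  -- Step D : linear algebra
  constructor
  · intro hmem
    obtain ⟨s, t, hst⟩ := Submodule.mem_span_pair.1 hmem
    have : B (x w₀) (pduv x w₀) = 0 := by
      rw [← hst]
      simp [key1u, key1v]
    rw [hBsymm]
    linarith [key3]
  · intro horth
    have hBx : B (x w₀) (pduv x w₀) = 0 := by
      have := hBsymm (pdv x w₀) (pdu x w₀)
      linarith [key3, this, horth]
    have htop : Submodule.span ℝ (Set.range ![x w₀, pdu x w₀, pdv x w₀]) = ⊤ :=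
      hind.span_eq_top_of_card_eq_finrank (by simp)
    have hrange : Set.range ![x w₀, pdu x w₀, pdv x w₀]
        = insert (x w₀) {pdu x w₀, pdv x w₀} := by
      ext ξ
      simp [Matrix.range_cons, Matrix.range_empty]
      tauto
    have hmem : pduv x w₀ ∈ Submodule.span ℝ (insert (x w₀) {pdu x w₀, pdv x w₀}) := by
      rw [← hrange, htop]; trivial
    obtain ⟨a, z, hz, hrep⟩ := Submodule.mem_span_insert.1 hmem
    obtain ⟨s, t, hst⟩ := Submodule.mem_span_pair.1 hz
    have hBz : B (x w₀) z = 0 := by rw [← hst]; simp [key1u, key1v]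
    have ha : a * c = 0 := by
      have : B (x w₀) (pduv x w₀) = a * c + B (x w₀) z := by
        rw [hrep]
        simp [hquad w₀ hw₀, mul_comm]
      rw [hBx, hBz] at this
      linarith
    have ha0 : a = 0 := by
      rcases mul_eq_zero.1 ha with h | h
      · exact h
      · exact absurd h hc
    rw [hrep, ha0, zero_smul, zero_add]
    exact hz
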